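/- Let A be a finite NM algebra and let ν : A → ℝ be its idempotent Euler characteristic. Then for every x ∈ A, ν(x) equals the number of minimal idempotent join-irreducible elements g ∈ A with g ≤ x, where an idempotent join-irreducible element g is minimal if there is no idempotent join-irreducible g' with g' < g. -/

import Mathlib

/-- A valuation on a lattice: ν(x)+ν(y) = ν(x⊔y)+ν(x⊓y). -/
def IsValuation {α : Type*} [Lattice α] (ν : α → ℝ) : Prop :=
  ∀ x y : α, ν x + ν y = ν (x ⊔ y) + ν (x ⊓ y)

/-- Join-irreducible element of a lattice with bottom. -/
def JoinIrred {α : Type*} [Lattice α] [OrderBot α] (x : α) : Prop :=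
  x ≠ ⊥ ∧ ∀ y z : α, x = y ⊔ z → x = y ∨ x = z

/-- An NM algebra: a bounded distributive lattice with a commutative monoidal
operation `odot` (unit ⊤) and its residuum `himp`, satisfying prelinearity,
the weak nilpotent minimum law and involutivity of the negation ¬x = x → ⊥. -/
class NMAlgebra (α : Type*) extends DistribLattice α, BoundedOrder α where
  odot : α → α → α
  himp : α → α → α
  odot_comm : ∀ x y : α, odot x y = odot y x
  odot_assoc : ∀ x y z : α, odot (odot x y) z = odot x (odot y z)
  odot_top : ∀ x : α, odot x ⊤ = x
  residuation : ∀ x y z : α, odot x y ≤ z ↔ x ≤ himp y z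
  prelinearity : ∀ x y : α, himp x y ⊔ himp y x = ⊤
  wnm : ∀ x y : α, himp (odot x y) ⊥ ⊔ himp (x ⊓ y) (odot x y) = ⊤
  involution : ∀ x : α, himp (himp x ⊥) ⊥ = x

/-- Negation in an NM algebra: ¬x = x → ⊥. -/
def NMAlgebra.neg {α : Type*} [NMAlgebra α] (x : α) : α := NMAlgebra.himp x ⊥

/-- A filter of an NM algebra: a nonempty upper set closed under ⊙. -/
def NMAlgebra.IsFilter {α : Type*} [NMAlgebra α] (S : Set α) : Prop :=
  S.Nonempty ∧ (∀ x y : α, x ∈ S → x ≤ y → y ∈ S) ∧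
    ∀ x y : α, x ∈ S → y ∈ S → NMAlgebra.odot x y ∈ S

/-- A prime filter: a proper filter such that x⊔y ∈ S implies x ∈ S or y ∈ S. -/
def NMAlgebra.IsPrimeFilter {α : Type*} [NMAlgebra α] (S : Set α) : Prop :=
  NMAlgebra.IsFilter S ∧ S ≠ Set.univ ∧ ∀ x y : α, x ⊔ y ∈ S → x ∈ S ∨ y ∈ S

/-- A maximal prime filter: a prime filter maximal w.r.t. inclusion among proper filters. -/
def NMAlgebra.IsMaximalPrimeFilter {α : Type*} [NMAlgebra α] (S : Set α) : Prop :=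
  NMAlgebra.IsPrimeFilter S ∧
    ∀ T : Set α, NMAlgebra.IsFilter T → T ≠ Set.univ → S ⊆ T → T = S

/-- The idempotent Euler characteristic: the valuation with ν(⊥)=0, ν(g)=1 on
idempotent join-irreducibles and ν(g)=0 on the other join-irreducibles. -/
def IsIdemEuler {α : Type*} [NMAlgebra α] (ν : α → ℝ) : Prop :=
  IsValuation ν ∧ ν ⊥ = 0 ∧
    ∀ g : α, JoinIrred g →
      (NMAlgebra.odot g g = g → ν g = 1) ∧ (NMAlgebra.odot g g ≠ g → ν g = 0)

/-- Negation on the three-element NM chain 𝟯 = {0, ½, 1}, modelled as `Fin 3`. -/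
def neg3 : Fin 3 → Fin 3 := ![2, 1, 0]

/-- The monoidal operation of 𝟯: x⊙y = min(x,y) if x > ¬y, and 0 otherwise. -/
def odot3 (x y : Fin 3) : Fin 3 := if neg3 y < x then min x y else 0

/-- The residuum of 𝟯: x→y = 1 if x ≤ y, and max(¬x,y) otherwise. -/
def himp3 (x y : Fin 3) : Fin 3 := if x ≤ y then 2 else max (neg3 x) y

/-- NM homomorphisms into the three-element NM chain 𝟯 (as `Fin 3`, top element `2`). -/
def IsHom3 {α : Type*} [NMAlgebra α] (h : α → Fin 3) : Prop :=
  h ⊥ = 0 ∧ h ⊤ = 2 ∧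
  (∀ x y : α, h (x ⊓ y) = min (h x) (h y)) ∧
  (∀ x y : α, h (x ⊔ y) = max (h x) (h y)) ∧
  (∀ x y : α, h (NMAlgebra.odot x y) = odot3 (h x) (h y)) ∧
  (∀ x y : α, h (NMAlgebra.himp x y) = himp3 (h x) (h y))

/-- Negation on the two-element NM chain 𝟚 = {0, 1}, modelled as `Fin 2`. -/
def neg2 : Fin 2 → Fin 2 := ![1, 0]

/-- The monoidal operation of 𝟚 is ∧ (Boolean). -/
def odot2 (x y : Fin 2) : Fin 2 := min x y

/-- The residuum of 𝟚: Boolean implication x→y = max(¬x, y). -/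
def himp2 (x y : Fin 2) : Fin 2 := max (neg2 x) y

/-- NM homomorphisms into the two-element NM chain 𝟚 (as `Fin 2`, top element `1`). -/
def IsHom2 {α : Type*} [NMAlgebra α] (h : α → Fin 2) : Prop :=
  h ⊥ = 0 ∧ h ⊤ = 1 ∧
  (∀ x y : α, h (x ⊓ y) = min (h x) (h y)) ∧
  (∀ x y : α, h (x ⊔ y) = max (h x) (h y)) ∧
  (∀ x y : α, h (NMAlgebra.odot x y) = odot2 (h x) (h y)) ∧
  (∀ x y : α, h (NMAlgebra.himp x y) = himp2 (h x) (h y))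

/-- The nilpotent minimum t-norm on ℝ (intended on [0,1]). -/
noncomputable def nmT (x y : ℝ) : ℝ := if 1 < x + y then min x y else 0

/-- The residuum of the nilpotent minimum t-norm on ℝ (intended on [0,1]). -/
noncomputable def nmImp (x y : ℝ) : ℝ := if x ≤ y then 1 else max (1 - x) y

section NMAux
open NMAlgebra
variable {A : Type*} [NMAlgebra A]

lemma nm_res {x y z : A} : odot x y ≤ z ↔ x ≤ himp y z := residuation x y z

lemma nm_odot_mono_left {x y : A} (h : x ≤ y) (z : A) : odot x z ≤ odot y z :=
  nm_res.mpr (h.trans (nm_res.mp le_rfl))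

lemma nm_odot_mono_right {x y : A} (h : x ≤ y) (z : A) : odot z x ≤ odot z y := by
  rw [odot_comm z x, odot_comm z y]; exact nm_odot_mono_left h z

lemma nm_odot_le_left (x y : A) : odot x y ≤ x :=
  (nm_odot_mono_right le_top x).trans (le_of_eq (odot_top x))

lemma nm_mp (a b : A) : odot (himp a b) a ≤ b := nm_res.mpr le_rfl

lemma nm_himp_mono_right {b b' : A} (h : b ≤ b') (a : A) : himp a b ≤ himp a b' :=
  nm_res.mp ((nm_mp a b).trans h)

lemma nm_himp_anti_left {a a' : A} (h : a ≤ a') (b : A) : himp a' b ≤ himp a b :=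
  nm_res.mp ((nm_odot_mono_right h _).trans (nm_mp a' b))

lemma nm_key (x : A) : x ≤ odot x x ⊔ himp x ⊥ := by
  have h1 : himp (odot x x) ⊥ ≤ himp x (odot x x ⊔ himp x ⊥) := by
    apply nm_res.mp
    have hx : odot (odot (himp (odot x x) ⊥) x) x ≤ ⊥ := by
      rw [odot_assoc]; exact nm_mp (odot x x) ⊥
    exact (nm_res.mp hx).trans le_sup_right
  have h2 : himp x (odot x x) ≤ himp x (odot x x ⊔ himp x ⊥) :=
    nm_himp_mono_right le_sup_left x
  have htop : (⊤ : A) ≤ himp x (odot x x ⊔ himp x ⊥) := by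
    have hw := wnm x x
    rw [inf_idem] at hw
    calc (⊤ : A) = _ := hw.symm
    _ ≤ _ := sup_le h1 h2
  have := nm_res.mpr htop
  rwa [odot_comm, odot_top] at this

lemma JoinIrred.prime {g : A} (hg : JoinIrred g) {a b : A} (h : g ≤ a ⊔ b) :
    g ≤ a ∨ g ≤ b := by
  have hd : g = (g ⊓ a) ⊔ (g ⊓ b) := by
    rw [← inf_sup_left]; exact (inf_eq_left.mpr h).symm
  rcases hg.2 _ _ hd with h' | h'
  · exact Or.inl (h' ▸ inf_le_right)
  · exact Or.inr (h' ▸ inf_le_right)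

lemma nm_idem_of_le {g g' : A} (hg : JoinIrred g) (h' : JoinIrred g')
    (hi : odot g' g' = g') (hle : g' ≤ g) : odot g g = g := by
  rcases hg.prime (nm_key g) with h | h
  · exact le_antisymm (nm_odot_le_left g g) h
  · exfalso
    have h1 : g' ≤ himp g' ⊥ := hle.trans (h.trans (nm_himp_anti_left hle ⊥))
    have h2 : odot g' g' ≤ ⊥ :=
      (nm_odot_mono_left h1 g').trans (nm_mp g' ⊥)
    exact h'.1 (le_bot_iff.mp (hi ▸ h2))

lemma nm_idem_comparable {g a b : A} (hg : JoinIrred g) (ha : odot a a = a)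
    (hb : odot b b = b) (hag : a ≤ g) (hbg : b ≤ g) : a ≤ b ∨ b ≤ a := by
  have hp : g ≤ himp a b ⊔ himp b a := by rw [prelinearity]; exact le_top
  rcases hg.prime hp with h | h
  · refine Or.inl ?_
    calc a = odot a a := ha.symm
    _ ≤ odot g a := nm_odot_mono_left hag a
    _ ≤ odot (himp a b) a := nm_odot_mono_left h a
    _ ≤ b := nm_mp a b
  · refine Or.inr ?_
    calc b = odot b b := hb.symm
    _ ≤ odot g b := nm_odot_mono_left hbg b
    _ ≤ odot (himp b a) b := nm_odot_mono_left h b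
    _ ≤ a := nm_mp b a

end NMAux

/-- χ⁺(x) equals the number of minimal idempotent join-irreducible
elements g with g ≤ x. -/
theorem stmt5 {A : Type*} [NMAlgebra A] [Fintype A] (ν : A → ℝ)
    (hν : IsIdemEuler ν) (x : A) :
    ν x = Nat.card {g : A // JoinIrred g ∧ NMAlgebra.odot g g = g ∧
      (¬ ∃ g' : A, JoinIrred g' ∧ NMAlgebra.odot g' g' = g' ∧ g' < g) ∧ g ≤ x} := by
  classical
  obtain ⟨hval, hbot, hji⟩ := hν
  set P : A → A → Prop := fun x g => JoinIrred g ∧ NMAlgebra.odot g g = g ∧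
      (¬ ∃ g' : A, JoinIrred g' ∧ NMAlgebra.odot g' g' = g' ∧ g' < g) ∧ g ≤ x with hP
  set μ : A → ℕ := fun x => (Finset.univ.filter (P x)).card with hμ
  have main : ∀ x : A, ν x = (μ x : ℝ) := by
    intro x
    induction x using WellFoundedLT.induction with
    | _ x IH =>
    by_cases hbotx : x = ⊥
    · subst hbotx
      have he : Finset.univ.filter (P ⊥) = (∅ : Finset A) := by
        ext g
        simp only [Finset.mem_filter, Finset.mem_univ, true_and, Finset.notMem_empty,
          iff_false]
        rintro ⟨hg1, _, _, hle⟩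
        exact hg1.1 (le_bot_iff.mp hle)
      simp [hμ, he, hbot]
    by_cases hJI : JoinIrred x
    · by_cases hid : NMAlgebra.odot x x = x
      · -- idempotent join-irreducible: the filter is a singleton
        obtain ⟨m, hm, hmin⟩ : ∃ m ∈ (Finset.univ.filter (fun h : A => JoinIrred h ∧ NMAlgebra.odot h h = h ∧ h ≤ x)),
            ∀ y ∈ (Finset.univ.filter (fun h : A => JoinIrred h ∧ NMAlgebra.odot h h = h ∧ h ≤ x)), ¬ y < m := by
          obtain ⟨m, hm⟩ := Finset.exists_minimal
            (s := Finset.univ.filter (fun h : A => JoinIrred h ∧ NMAlgebra.odot h h = h ∧ h ≤ x))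
            ⟨x, by simp [hJI, hid]⟩
          exact ⟨m, hm.1, fun y hy hlt => hm.not_lt hy hlt⟩
        simp only [Finset.mem_filter, Finset.mem_univ, true_and] at hm hmin
        have hmP : P x m := by
          refine ⟨hm.1, hm.2.1, ?_, hm.2.2⟩
          rintro ⟨g', hg'1, hg'2, hg'3⟩
          exact hmin g' ⟨hg'1, hg'2, (hg'3.le.trans hm.2.2)⟩ hg'3
        have hsingle : Finset.univ.filter (P x) = {m} := by
          ext g
          simp only [Finset.mem_filter, Finset.mem_univ, true_and, Finset.mem_singleton]
          constructor
          · rintro ⟨hg1, hg2, hg3, hg4⟩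
            rcases nm_idem_comparable hJI hg2 hm.2.1 hg4 hm.2.2 with h | h
            · by_contra hne
              exact hmP.2.2.1 ⟨g, hg1, hg2, lt_of_le_of_ne h hne⟩
            · by_contra hne
              exact hg3 ⟨m, hm.1, hm.2.1, lt_of_le_of_ne h (fun e => hne e.symm)⟩
          · rintro rfl; exact hmP
        rw [(hji x hJI).1 hid]
        simp [hμ, hsingle]
      · -- non-idempotent join-irreducible: the filter is empty
        have he : Finset.univ.filter (P x) = (∅ : Finset A) := by
          ext g
          simp only [Finset.mem_filter, Finset.mem_univ, true_and, Finset.notMem_empty,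
            iff_false]
          rintro ⟨hg1, hg2, _, hg4⟩
          exact hid (nm_idem_of_le hJI hg1 hg2 hg4)
        rw [(hji x hJI).2 hid]
        simp [hμ, he]
    · -- reducible: use the valuation property
      obtain ⟨a, b, hab, hna, hnb⟩ : ∃ a b, x = a ⊔ b ∧ x ≠ a ∧ x ≠ b := by
        by_contra h; push_neg at h
        exact hJI ⟨hbotx, fun y z hyz => or_iff_not_imp_left.mpr (h y z hyz)⟩
      have ha : a < x := lt_of_le_of_ne (hab ▸ le_sup_left) (Ne.symm hna)
      have hb : b < x := lt_of_le_of_ne (hab ▸ le_sup_right) (Ne.symm hnb)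
      have hiab : a ⊓ b < x := inf_le_left.trans_lt ha
      have hsub : Finset.univ.filter (P (a ⊔ b)) =
          Finset.univ.filter (P a) ∪ Finset.univ.filter (P b) := by
        ext g
        simp only [Finset.mem_filter, Finset.mem_univ, true_and, Finset.mem_union]
        constructor
        · rintro ⟨h1, h2, h3, h4⟩
          rcases h1.prime h4 with h | h
          · exact Or.inl ⟨h1, h2, h3, h⟩
          · exact Or.inr ⟨h1, h2, h3, h⟩
        · rintro (⟨h1, h2, h3, h4⟩ | ⟨h1, h2, h3, h4⟩)
          · exact ⟨h1, h2, h3, h4.trans le_sup_left⟩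
          · exact ⟨h1, h2, h3, h4.trans le_sup_right⟩
      have hinf : Finset.univ.filter (P (a ⊓ b)) =
          Finset.univ.filter (P a) ∩ Finset.univ.filter (P b) := by
        ext g
        simp only [Finset.mem_filter, Finset.mem_univ, true_and, Finset.mem_inter]
        constructor
        · rintro ⟨h1, h2, h3, h4⟩
          exact ⟨⟨h1, h2, h3, h4.trans inf_le_left⟩, ⟨h1, h2, h3, h4.trans inf_le_right⟩⟩
        · rintro ⟨⟨h1, h2, h3, h4⟩, ⟨_, _, _, h4'⟩⟩
          exact ⟨h1, h2, h3, le_inf h4 h4'⟩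
      have hcard : μ (a ⊔ b) + μ (a ⊓ b) = μ a + μ b := by
        simp only [hμ, hsub, hinf]
        exact Finset.card_union_add_card_inter _ _
      have hv := hval a b
      have hIHa := IH a ha
      have hIHb := IH b hb
      have hIHab := IH (a ⊓ b) hiab
      have hcast : (μ (a ⊔ b) : ℝ) + (μ (a ⊓ b) : ℝ) = (μ a : ℝ) + (μ b : ℝ) := by
        exact_mod_cast congrArg (Nat.cast : ℕ → ℝ) hcard
      rw [hab]
      linarith [hv, hIHa, hIHb, hIHab, hcast]
  have hNat : Nat.card {g : A // P x g} = μ x := by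
    simp [hμ, Nat.card_eq_fintype_card, Fintype.card_subtype]
  rw [main x, ← hNat]
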